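/- If two permutations π and ρ are sorted by s_T with the same movement sequence and s_T(π) = s_T(ρ), then π = ρ. -/

import Mathlib

open List

attribute [local instance] Classical.propDecidable

/-- `u` is order-isomorphic to `v`. -/
def OrdIso (u v : List ℕ) : Prop :=
  u.length = v.length ∧
    ∀ i j, i < u.length → j < u.length →
      (u.getD i 0 < u.getD j 0 ↔ v.getD i 0 < v.getD j 0)

/-- The word `w` contains the pattern `p`. -/
def Contains (w p : List ℕ) : Prop :=
  ∃ u, u.Sublist w ∧ OrdIso u p

/-- The word `w` avoids every pattern in `T`. -/
def AvoidsSet (T : Set (List ℕ)) (w : List ℕ) : Prop :=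
  ∀ p ∈ T, ¬ Contains w p

/-- One step of the `T`-avoiding stack machine: state is (input, stack, output);
the stack is read top to bottom (head is the top). -/
noncomputable def sTaux (T : Set (List ℕ)) : List ℕ → List ℕ → List ℕ → List ℕ
  | [], stack, out => out ++ stack
  | x :: rest, stack, out =>
    if AvoidsSet T (x :: stack) then sTaux T rest (x :: stack) out
    else
      match stack with
      | [] => sTaux T rest [x] out
      | y :: s => sTaux T (x :: rest) s (out ++ [y])
termination_by input stack _ => 2 * input.length + stack.length
decreasing_by all_goals first | (simp_wf; omega) | omega | simp_wf

/-- The stack-sorting map `s_T`. -/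
noncomputable def sT (T : Set (List ℕ)) (w : List ℕ) : List ℕ := sTaux T w [] []

/-- `w` is a permutation of `{1, …, w.length}`. -/
def IsPermList (w : List ℕ) : Prop := w.Perm (List.range' 1 w.length)

/-- `T` is reduced: no element of `T` contains another element of `T`. -/
def Reduced (T : Set (List ℕ)) : Prop :=
  ∀ σ ∈ T, ∀ τ ∈ T, σ ≠ τ → ¬ Contains σ τ

/-- `σ̂`: swap the first two entries of `σ`. -/
def hat : List ℕ → List ℕ
  | a :: b :: t => b :: a :: t
  | l => l

/-- A move of the stack machine: push (`N`) or pop (`X`). -/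
inductive SortMove | push | pop
deriving DecidableEq

/-- The movement sequence of the `T`-avoiding stack machine. -/
noncomputable def movesAux (T : Set (List ℕ)) : List ℕ → List ℕ → List SortMove
  | [], stack => List.replicate stack.length SortMove.pop
  | x :: rest, stack =>
    if AvoidsSet T (x :: stack) then SortMove.push :: movesAux T rest (x :: stack)
    else
      match stack with
      | [] => SortMove.push :: movesAux T rest [x]
      | _ :: s => SortMove.pop :: movesAux T (x :: rest) s
termination_by input stack => 2 * input.length + stack.length
decreasing_by all_goals first | (simp_wf; omega) | omega | simp_wf

/-- The movement sequence of `w` under `s_T`. -/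
noncomputable def moves (T : Set (List ℕ)) (w : List ℕ) : List SortMove := movesAux T w []


/-- Pure replay of a movement sequence. -/
def exec' : List SortMove → List ℕ → List ℕ → List ℕ
  | [], _, _ => []
  | .push :: m, x :: inp, st => exec' m inp (x :: st)
  | .push :: m, [], st => exec' m [] st
  | .pop :: m, inp, y :: st => y :: exec' m inp st
  | .pop :: m, inp, [] => exec' m inp []

/-- Validity of a movement sequence for given input/stack lengths. -/
def ok : List SortMove → ℕ → ℕ → Prop
  | [], i, s => i = 0 ∧ s = 0
  | .push :: m, i, s => 0 < i ∧ ok m (i - 1) (s + 1)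
  | .pop :: m, i, s => 0 < s ∧ ok m i (s - 1)

lemma exec'_replicate (st : List ℕ) (inp : List ℕ) :
    exec' (List.replicate st.length SortMove.pop) inp st = st := by
  induction st generalizing inp with
  | nil => rfl
  | cons a s ih => simp [exec', ih, List.replicate_succ]

lemma sTaux_eq_exec (T : Set (List ℕ)) (π st : List ℕ) :
    ∀ out, sTaux T π st out = out ++ exec' (movesAux T π st) π st := by
  induction π, st using movesAux.induct T with
  | case1 st => intro out; rw [sTaux.eq_def, movesAux.eq_def]; simp [exec'_replicate]
  | case2 x rest st h ih =>
      intro out; rw [sTaux.eq_def, movesAux.eq_def]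
      simp only [if_pos h, ih, exec']
  | case3 x rest h ih =>
      intro out; rw [sTaux.eq_def, movesAux.eq_def]
      simp only [if_neg h, ih, exec']
  | case4 x rest y s h ih =>
      intro out; rw [sTaux.eq_def, movesAux.eq_def]
      simp only [if_neg h, ih, exec']
      simp

lemma ok_movesAux (T : Set (List ℕ)) (π st : List ℕ) :
    ok (movesAux T π st) π.length st.length := by
  induction π, st using movesAux.induct T with
  | case1 st => rw [movesAux.eq_def]; simp only []; induction st with
      | nil => exact ⟨rfl, rfl⟩
      | cons a s ih => simpa [ok, List.replicate_succ] using ih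
  | case2 x rest st h ih =>
      rw [movesAux.eq_def]; simp only [if_pos h]
      exact ⟨Nat.succ_pos _, by simpa using ih⟩
  | case3 x rest h ih =>
      rw [movesAux.eq_def]; simp only [if_neg h]
      exact ⟨Nat.succ_pos _, by simpa using ih⟩
  | case4 x rest y s h ih =>
      rw [movesAux.eq_def]; simp only [if_neg h]
      exact ⟨Nat.succ_pos _, by simpa using ih⟩

lemma ok_unique : ∀ m i s i' s', ok m i s → ok m i' s' → i = i' ∧ s = s' := by
  intro m
  induction m with
  | nil => intro i s i' s' h h'; obtain ⟨rfl, rfl⟩ := h; obtain ⟨rfl, rfl⟩ := h'; exact ⟨rfl, rfl⟩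
  | cons a m ih =>
      intro i s i' s' h h'
      cases a with
      | push =>
          obtain ⟨hi, h⟩ := h; obtain ⟨hi', h'⟩ := h'
          obtain ⟨e1, e2⟩ := ih _ _ _ _ h h'
          omega
      | pop =>
          obtain ⟨hi, h⟩ := h; obtain ⟨hi', h'⟩ := h'
          obtain ⟨e1, e2⟩ := ih _ _ _ _ h h'
          omega

lemma exec'_inj : ∀ m i s (π ρ st st' : List ℕ), ok m i s →
    π.length = i → ρ.length = i → st.length = s → st'.length = s →
    exec' m π st = exec' m ρ st' → π = ρ ∧ st = st' := by
  intro m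
  induction m with
  | nil =>
      intro i s π ρ st st' h hπ hρ hst hst' _
      obtain ⟨rfl, rfl⟩ := h
      rw [List.length_eq_zero_iff] at *
      exact ⟨hπ.trans hρ.symm, hst.trans hst'.symm⟩
  | cons a m ih =>
      intro i s π ρ st st' h hπ hρ hst hst' he
      cases a with
      | push =>
          obtain ⟨hi, h⟩ := h
          cases π with
          | nil => simp at hπ; omega
          | cons x p =>
            cases ρ with
            | nil => simp at hρ; omega
            | cons y q =>
              rw [exec', exec'] at he
              obtain ⟨h1, h2⟩ := ih (i-1) (s+1) p q (x :: st) (y :: st')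
                h (by simp at hπ ⊢; omega) (by simp at hρ ⊢; omega)
                (by simp [hst]) (by simp [hst']) he
              cases h2 with | _ => exact ⟨by rw [h1], by simpa using h2⟩
      | pop =>
          obtain ⟨hs, h⟩ := h
          cases st with
          | nil => simp at hst; omega
          | cons a s1 =>
            cases st' with
            | nil => simp at hst'; omega
            | cons b s2 =>
              rw [exec', exec'] at he
              obtain ⟨e1, he⟩ := List.cons.injEq a _ b _ ▸ he
              obtain ⟨h1, h2⟩ := ih i (s-1) π ρ s1 s2 h hπ hρ
                (by simp at hst ⊢; omega) (by simp at hst' ⊢; omega) he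
              exact ⟨h1, by rw [e1, h2]⟩

/-- Two permutations with the same movement sequence and the same image under `s_T`
are equal. -/
theorem stmt8 (T : Set (List ℕ)) (π ρ : List ℕ) (hπ : IsPermList π)
    (hρ : IsPermList ρ) (hm : moves T π = moves T ρ) (hs : sT T π = sT T ρ) :
    π = ρ := by
  have hA : ∀ w : List ℕ, sT T w = exec' (movesAux T w []) w [] := fun w => by
    simpa [sT] using sTaux_eq_exec T w [] []
  have hoπ := ok_movesAux T π []
  have hoρ := ok_movesAux T ρ []
  rw [moves] at hm
  rw [hm] at hoπ
  have hlen := (ok_unique _ _ _ _ _ hoπ hoρ).1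
  rw [hA, hA, hm] at hs
  exact (exec'_inj _ ρ.length 0 π ρ [] [] hoρ hlen rfl rfl rfl hs).1
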